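/- Let V be a real vector space with a non-degenerate symmetric bilinear form B of signature (m, n) with m > 0. Let 𝒱⁺ be the set of linearly independent m-tuples (v₁,…,v_m) in V such that B is positive definite on span(v₁,…,v_m). Then 𝒱⁺ has exactly two path components, and two m-tuples (v₁,…,v_m), (w₁,…,w_m) in 𝒱⁺ lie in the same path component if and only if det((B(v_j, w_k))_{j,k}) > 0. -/

import Mathlib

set_option linter.unusedSectionVars false
open Matrix Finset

section helpers

variable {V : Type*} [NormedAddCommGroup V] [NormedSpace ℝ V] [FiniteDimensional ℝ V]
variable (B : V →ₗ[ℝ] V →ₗ[ℝ] ℝ)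

lemma st18_sum1 {k : ℕ} (c : Fin k → ℝ) (v : Fin k → V) (y : V) :
    B (∑ i, c i • v i) y = ∑ i, c i * B (v i) y := by
  simp [map_sum, LinearMap.sum_apply, _root_.map_smul]

lemma st18_sum2 {k : ℕ} (c : Fin k → ℝ) (v : Fin k → V) (y : V) :
    B y (∑ i, c i • v i) = ∑ i, c i * B y (v i) := by
  simp [map_sum, _root_.map_smul, smul_eq_mul]

lemma st18_quad {k : ℕ} (c d : Fin k → ℝ) (v w : Fin k → V) :
    B (∑ i, c i • v i) (∑ j, d j • w j) = ∑ i, ∑ j, c i * d j * B (v i) (w j) := by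
  rw [st18_sum1]
  refine Finset.sum_congr rfl fun i _ => ?_
  rw [st18_sum2, Finset.mul_sum]
  exact Finset.sum_congr rfl fun j _ => by ring

lemma st18_mem_iff {k : ℕ} (v : Fin k → V) :
    (LinearIndependent ℝ v ∧
      ∀ x ∈ Submodule.span ℝ (Set.range v), x ≠ 0 → 0 < B x x) ↔
    (∀ c : Fin k → ℝ, c ≠ 0 → 0 < B (∑ i, c i • v i) (∑ i, c i • v i)) := by
  constructor
  · rintro ⟨hli, hpos⟩ c hc
    refine hpos _ (Submodule.sum_mem _ fun i _ =>
      Submodule.smul_mem _ _ (Submodule.subset_span ⟨i, rfl⟩)) ?_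
    intro h0
    exact hc (funext fun i => Fintype.linearIndependent_iff.1 hli c h0 i)
  · intro h
    have hli : LinearIndependent ℝ v := by
      rw [Fintype.linearIndependent_iff]
      intro g hg i
      by_contra hgi
      have hgne : g ≠ 0 := fun h' => hgi (by simp [h'])
      have := h g hgne
      rw [hg] at this
      simp at this
    refine ⟨hli, fun x hx hx0 => ?_⟩
    obtain ⟨c, rfl⟩ := (Submodule.mem_span_range_iff_exists_fun ℝ).1 hx
    exact h c (fun h' => hx0 (by simp [h']))

lemma st18_no_orth (hsymm : ∀ v w : V, B v w = B w v) {m : ℕ}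
    (hmax : ∀ P : Submodule ℝ V, (∀ x ∈ P, x ≠ 0 → 0 < B x x) → Module.finrank ℝ P ≤ m)
    (U : Submodule ℝ V) (hU : ∀ x ∈ U, x ≠ 0 → 0 < B x x)
    (hfr : m ≤ Module.finrank ℝ U) (q : V)
    (horth : ∀ x ∈ U, B x q = 0) (hq : 0 < B q q) : False := by
  have hqU : q ∉ U := fun h => by simp [horth q h] at hq
  have hqmem : q ∈ U ⊔ (ℝ ∙ q) := Submodule.mem_sup_right (Submodule.mem_span_singleton_self q)
  have hposU' : ∀ y ∈ U ⊔ (ℝ ∙ q), y ≠ 0 → 0 < B y y := by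
    intro y hy hy0
    obtain ⟨x, hx, z, hz, rfl⟩ := Submodule.mem_sup.1 hy
    obtain ⟨t, rfl⟩ := Submodule.mem_span_singleton.1 hz
    have e1 : B x q = 0 := horth x hx
    have e2 : B q x = 0 := by rw [hsymm]; exact e1
    have hquad : B (x + t • q) (x + t • q) = B x x + t ^ 2 * B q q := by
      simp [map_add, _root_.map_smul, e1, e2, smul_eq_mul]
      ring
    rw [hquad]
    by_cases hx0 : x = 0
    · subst hx0
      have ht : t ≠ 0 := by rintro rfl; simp at hy0
      have : (0:ℝ) < t ^ 2 := by positivity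
      simp only [map_zero, LinearMap.zero_apply]
      nlinarith
    · have h1 : 0 < B x x := hU x hx hx0
      nlinarith [sq_nonneg t, hq.le, mul_nonneg (sq_nonneg t) hq.le]
  have hlt : U < U ⊔ (ℝ ∙ q) := lt_of_le_of_ne le_sup_left (fun h => hqU (h ▸ hqmem))
  have := Submodule.finrank_lt_finrank_of_lt hlt
  have := hmax _ hposU'
  omega

end helpers
section gram

variable {V : Type*} [NormedAddCommGroup V] [NormedSpace ℝ V] [FiniteDimensional ℝ V]
variable (B : V →ₗ[ℝ] V →ₗ[ℝ] ℝ)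

lemma st18_gram_ne (hsymm : ∀ v w : V, B v w = B w v) {m : ℕ}
    (hmax : ∀ P : Submodule ℝ V, (∀ x ∈ P, x ≠ 0 → 0 < B x x) → Module.finrank ℝ P ≤ m)
    (v w : Fin m → V)
    (hv : LinearIndependent ℝ v ∧
      ∀ x ∈ Submodule.span ℝ (Set.range v), x ≠ 0 → 0 < B x x)
    (hw : LinearIndependent ℝ w ∧
      ∀ x ∈ Submodule.span ℝ (Set.range w), x ≠ 0 → 0 < B x x) :
    Matrix.det (Matrix.of fun j k : Fin m => B (v j) (w k)) ≠ 0 := by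
  intro hdet
  obtain ⟨c, hc0, hc⟩ := (Matrix.exists_mulVec_eq_zero_iff).2 hdet
  set q := ∑ k, c k • w k with hqdef
  have hq : 0 < B q q := (st18_mem_iff B w).1 hw c hc0
  have horthj : ∀ j, B (v j) q = 0 := by
    intro j
    have := congrFun hc j
    simpa [Matrix.mulVec, dotProduct, hqdef, st18_sum2, mul_comm] using this
  have horth : ∀ x ∈ Submodule.span ℝ (Set.range v), B x q = 0 := by
    intro x hx
    have hle : Submodule.span ℝ (Set.range v) ≤ LinearMap.ker (B.flip q) := by
      rw [Submodule.span_le]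
      rintro _ ⟨j, rfl⟩
      simpa using horthj j
    simpa using hle hx
  have hfr : m ≤ Module.finrank ℝ (Submodule.span ℝ (Set.range v)) := by
    rw [finrank_span_eq_card hv.1]
    simp
  exact st18_no_orth B hsymm hmax _ hv.2 hfr q horth hq

lemma st18_gram_pos (hsymm : ∀ v w : V, B v w = B w v) {m : ℕ} (w : Fin m → V)
    (hw : LinearIndependent ℝ w ∧
      ∀ x ∈ Submodule.span ℝ (Set.range w), x ≠ 0 → 0 < B x x) :
    0 < Matrix.det (Matrix.of fun j k : Fin m => B (w j) (w k)) := by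
  apply Matrix.PosDef.det_pos
  rw [Matrix.posDef_iff_dotProduct_mulVec]
  constructor
  · ext j k
    simp [Matrix.conjTranspose_apply, hsymm (w j) (w k)]
  · intro x hx
    have key : dotProduct (star x) ((Matrix.of fun j k : Fin m => B (w j) (w k)) *ᵥ x) =
        B (∑ i, x i • w i) (∑ i, x i • w i) := by
      rw [st18_quad]
      simp only [star_trivial, dotProduct, Matrix.mulVec, Matrix.of_apply, Finset.mul_sum]
      exact Finset.sum_congr rfl fun i _ => Finset.sum_congr rfl fun j _ => by ring
    rw [key]
    exact (st18_mem_iff B w).1 hw x hx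

end gram
section glpos

open Matrix

variable {m : ℕ}

lemma st18_transvection_cont (i j : Fin m) (c : ℝ) :
    Continuous fun s : ℝ => Matrix.transvection i j (s * c) := by
  apply continuous_matrix
  intro a b
  simp only [Matrix.transvection, Matrix.add_apply, Matrix.single]
  by_cases h : i = a ∧ j = b <;> simp [h] <;> fun_prop

lemma st18_tv_left (t : Matrix.TransvectionStruct (Fin m) ℝ)
    (A : Matrix (Fin m) (Fin m) ℝ) (hA : 0 < A.det) :
    JoinedIn {M : Matrix (Fin m) (Fin m) ℝ | 0 < M.det} (t.toMatrix * A) A := by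
  obtain ⟨i, j, hij, c⟩ := t
  apply JoinedIn.symm
  apply JoinedIn.ofLine (f := fun s : ℝ => Matrix.transvection i j (s * c) * A)
    (((st18_transvection_cont i j c).matrix_mul continuous_const).continuousOn)
  · simp [Matrix.transvection]
  · rw [Matrix.TransvectionStruct.toMatrix_mk]
    simp
  · rintro _ ⟨s, _, rfl⟩
    simp [Set.mem_setOf_eq, Matrix.det_mul, Matrix.det_transvection_of_ne i j hij, hA]

lemma st18_tv_right (t : Matrix.TransvectionStruct (Fin m) ℝ)
    (A : Matrix (Fin m) (Fin m) ℝ) (hA : 0 < A.det) :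
    JoinedIn {M : Matrix (Fin m) (Fin m) ℝ | 0 < M.det} (A * t.toMatrix) A := by
  obtain ⟨i, j, hij, c⟩ := t
  apply JoinedIn.symm
  apply JoinedIn.ofLine (f := fun s : ℝ => A * Matrix.transvection i j (s * c))
    ((continuous_const.matrix_mul (st18_transvection_cont i j c)).continuousOn)
  · simp [Matrix.transvection]
  · rw [Matrix.TransvectionStruct.toMatrix_mk]
    simp
  · rintro _ ⟨s, _, rfl⟩
    simp [Set.mem_setOf_eq, Matrix.det_mul, Matrix.det_transvection_of_ne i j hij, hA]

lemma st18_list_left (L : List (Matrix.TransvectionStruct (Fin m) ℝ)) :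
    ∀ (A : Matrix (Fin m) (Fin m) ℝ), 0 < A.det →
    JoinedIn {M : Matrix (Fin m) (Fin m) ℝ | 0 < M.det}
      ((L.map Matrix.TransvectionStruct.toMatrix).prod * A) A := by
  induction L with
  | nil => intro A hA; rw [List.map_nil, List.prod_nil, Matrix.one_mul]; exact JoinedIn.refl hA
  | cons t L IH =>
    intro A hA
    rw [List.map_cons, List.prod_cons, Matrix.mul_assoc]
    have hdet : 0 < ((L.map Matrix.TransvectionStruct.toMatrix).prod * A).det := by
      rw [Matrix.det_mul, Matrix.TransvectionStruct.det_toMatrix_prod, one_mul]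
      exact hA
    exact (st18_tv_left t _ hdet).trans (IH A hA)

lemma st18_list_right (L : List (Matrix.TransvectionStruct (Fin m) ℝ)) :
    ∀ (A : Matrix (Fin m) (Fin m) ℝ), 0 < A.det →
    JoinedIn {M : Matrix (Fin m) (Fin m) ℝ | 0 < M.det}
      (A * (L.map Matrix.TransvectionStruct.toMatrix).prod) A := by
  induction L with
  | nil => intro A hA; rw [List.map_nil, List.prod_nil, Matrix.mul_one]; exact JoinedIn.refl hA
  | cons t L IH =>
    intro A hA
    rw [List.map_cons, List.prod_cons, ← Matrix.mul_assoc]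
    have hdet : 0 < (A * t.toMatrix).det := by
      rw [Matrix.det_mul, Matrix.TransvectionStruct.det t, mul_one]
      exact hA
    exact (IH _ hdet).trans (st18_tv_right t A hA)

end glpos
section glpos2

open Matrix

variable {m : ℕ}

lemma st18_rowJ {i j : Fin m} (hij : i ≠ j) (M : Matrix (Fin m) (Fin m) ℝ) (a b : Fin m) :
    ((Matrix.transvection i j 1 * (Matrix.transvection j i (-1) *
      (Matrix.transvection i j 1 * M)) : Matrix (Fin m) (Fin m) ℝ)) a b =
      if a = i then M j b else if a = j then -(M i b) else M a b := by
  rcases eq_or_ne a i with rfl | hai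
  · simp [hij, hij.symm]
  · rcases eq_or_ne a j with rfl | haj
    · simp [hij, hij.symm, hai]
    · simp [hai, haj]

end glpos2
section glpos3

open Matrix

variable {m : ℕ}

lemma st18_flip2 {i j : Fin m} (hij : i ≠ j) (s : Fin m → ℝ) :
    ((([⟨i, j, hij, 1⟩, ⟨j, i, hij.symm, -1⟩, ⟨i, j, hij, 1⟩, ⟨i, j, hij, 1⟩,
        ⟨j, i, hij.symm, -1⟩, ⟨i, j, hij, 1⟩] :
      List (Matrix.TransvectionStruct (Fin m) ℝ)).map
      Matrix.TransvectionStruct.toMatrix).prod) * Matrix.diagonal s =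
    Matrix.diagonal (fun k => if k = i ∨ k = j then -s k else s k) := by
  have hstep : ∀ (M : Matrix (Fin m) (Fin m) ℝ),
      ((([⟨i, j, hij, 1⟩, ⟨j, i, hij.symm, -1⟩, ⟨i, j, hij, 1⟩, ⟨i, j, hij, 1⟩,
        ⟨j, i, hij.symm, -1⟩, ⟨i, j, hij, 1⟩] :
      List (Matrix.TransvectionStruct (Fin m) ℝ)).map
      Matrix.TransvectionStruct.toMatrix).prod) * M =
      Matrix.transvection i j 1 * (Matrix.transvection j i (-1) *
        (Matrix.transvection i j 1 * (Matrix.transvection i j 1 *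
          (Matrix.transvection j i (-1) * (Matrix.transvection i j 1 * M))))) := by
    intro M
    simp [Matrix.TransvectionStruct.toMatrix_mk, Matrix.mul_assoc]
  rw [hstep]
  ext a b
  rw [st18_rowJ hij]
  rcases eq_or_ne a i with rfl | hai
  · rw [if_pos rfl, st18_rowJ hij, if_neg hij.symm, if_pos rfl]
    simp [Matrix.diagonal_apply, hij.symm]
    split_ifs <;> simp
  · rcases eq_or_ne a j with rfl | haj
    · rw [if_neg hai, if_pos rfl, st18_rowJ hij, if_pos rfl]
      simp [Matrix.diagonal_apply, hai]
      split_ifs <;> simp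
    · rw [if_neg hai, if_neg haj, st18_rowJ hij, if_neg hai, if_neg haj]
      simp [Matrix.diagonal_apply, hai, haj]

lemma st18_diag_deform (D : Fin m → ℝ) (hD : 0 < (Matrix.diagonal D).det) :
    JoinedIn {M : Matrix (Fin m) (Fin m) ℝ | 0 < M.det} (Matrix.diagonal D)
      (Matrix.diagonal (fun i => if D i < 0 then (-1 : ℝ) else 1)) := by
  have hDi : ∀ i, D i ≠ 0 := by
    rw [Matrix.det_diagonal] at hD
    intro i
    exact Finset.prod_ne_zero_iff.1 hD.ne' i (Finset.mem_univ i)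
  set e : ℝ → Fin m → ℝ :=
    fun t i => (1 - t) * D i + t * (if D i < 0 then (-1 : ℝ) else 1) with he
  apply JoinedIn.ofLine (f := fun t : ℝ => Matrix.diagonal (e t))
  · apply Continuous.continuousOn
    apply continuous_matrix
    intro a b
    simp only [Matrix.diagonal_apply]
    by_cases h : a = b <;> simp [h] <;> fun_prop
  · simp [he]
  · simp [he]
  · rintro _ ⟨t, ht, rfl⟩
    simp only [Set.mem_setOf_eq, Matrix.det_diagonal]
    have hsign : ∀ i, 0 < e t i / D i := by
      intro i
      rcases lt_or_gt_of_ne (hDi i) with hneg | hpos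
      · apply div_pos_of_neg_of_neg _ hneg
        simp only [he, if_pos hneg]
        rcases eq_or_lt_of_le ht.1 with rfl | ht0
        · simpa using hneg
        · nlinarith [mul_nonpos_of_nonneg_of_nonpos (sub_nonneg.2 ht.2) hneg.le]
      · apply div_pos _ hpos
        simp only [he, if_neg (not_lt.2 hpos.le)]
        rcases eq_or_lt_of_le ht.1 with rfl | ht0
        · simpa using hpos
        · nlinarith [mul_nonneg (sub_nonneg.2 ht.2) hpos.le]
    have key : ∏ i, e t i = (∏ i, e t i / D i) * ∏ i, D i := by
      rw [← Finset.prod_mul_distrib]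
      exact Finset.prod_congr rfl fun i _ => (div_mul_cancel₀ _ (hDi i)).symm
    rw [key]
    rw [Matrix.det_diagonal] at hD
    exact mul_pos (Finset.prod_pos fun i _ => hsign i) hD

end glpos3
section glpos4

open Matrix

variable {m : ℕ}

lemma st18_signs (N : ℕ) : ∀ (s : Fin m → ℝ), (∀ i, s i = 1 ∨ s i = -1) →
    0 < (Matrix.diagonal s).det →
    (Finset.univ.filter (fun i => s i = -1)).card = N →
    JoinedIn {M : Matrix (Fin m) (Fin m) ℝ | 0 < M.det} (Matrix.diagonal s) 1 := by
  induction N using Nat.strong_induction_on with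
  | _ N IH =>
    intro s hs hdet hcard
    rcases Finset.eq_empty_or_nonempty
        (Finset.univ.filter (fun i => s i = -1)) with hemp | ⟨i, hi⟩
    · have hone : s = fun _ => 1 := funext fun k => (hs k).resolve_right fun h =>
        (Finset.eq_empty_iff_forall_notMem.1 hemp k)
          (Finset.mem_filter.2 ⟨Finset.mem_univ k, h⟩)
      rw [hone, Matrix.diagonal_one]
      exact JoinedIn.refl (by norm_num [Set.mem_setOf_eq])
    · have hsi : s i = -1 := (Finset.mem_filter.1 hi).2
      set F := Finset.univ.filter (fun i => s i = -1) with hF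
      have hN : 0 < N := hcard ▸ Finset.card_pos.2 ⟨i, hi⟩
      have hNcard : F.card = N := hcard
      have herase : 0 < (F.erase i).card := by
        have hprod : (Matrix.diagonal s).det = (-1 : ℝ) ^ F.card := by
          rw [Matrix.det_diagonal,
            ← Finset.prod_filter_mul_prod_filter_not Finset.univ (fun i => s i = -1)]
          rw [show (Finset.univ.filter (fun i => s i = -1)) = F from rfl]
          have h1 : ∏ k ∈ F, s k = (-1 : ℝ) ^ F.card := by
            rw [Finset.prod_congr rfl (fun k hk => (Finset.mem_filter.1 hk).2)]
            simp
            rfl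
          have h2 : ∏ k ∈ Finset.univ.filter (fun i => ¬s i = -1), s k = 1 := by
            apply Finset.prod_eq_one
            intro k hk
            exact (hs k).resolve_right (Finset.mem_filter.1 hk).2
          rw [h1, h2, mul_one]
        have heven : Even F.card := by
          rcases Nat.even_or_odd F.card with he | ho
          · exact he
          · rw [hprod, ho.neg_one_pow] at hdet
            norm_num at hdet
        have : F.card ≠ 1 := by
          intro h1
          rw [h1] at heven
          exact (Nat.not_even_one) heven
        have hc1 : 1 ≤ F.card := Finset.card_pos.2 ⟨i, hi⟩
        rw [Finset.card_erase_of_mem hi]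
        omega
      obtain ⟨j, hj⟩ := Finset.card_pos.1 herase
      have hji : j ≠ i := (Finset.mem_erase.1 hj).1
      have hjF : j ∈ F := (Finset.mem_erase.1 hj).2
      have hsj : s j = -1 := (Finset.mem_filter.1 hjF).2
      have hij : i ≠ j := hji.symm
      set s' : Fin m → ℝ := fun k => if k = i ∨ k = j then (1 : ℝ) else s k with hs'
      have key : ((([⟨i, j, hij, 1⟩, ⟨j, i, hij.symm, -1⟩, ⟨i, j, hij, 1⟩, ⟨i, j, hij, 1⟩,
            ⟨j, i, hij.symm, -1⟩, ⟨i, j, hij, 1⟩] :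
          List (Matrix.TransvectionStruct (Fin m) ℝ)).map
          Matrix.TransvectionStruct.toMatrix).prod) * Matrix.diagonal s' =
          Matrix.diagonal s := by
        have harg : (fun k => if k = i ∨ k = j then -s' k else s' k) = s := by
          funext k
          by_cases hk : k = i ∨ k = j
          · simp only [hs', if_pos hk]
            rcases hk with rfl | rfl
            · exact hsi.symm
            · exact hsj.symm
          · simp only [hs', if_neg hk]
        rw [st18_flip2 hij s', harg]
      have hdet' : 0 < (Matrix.diagonal s').det := by
        have := hdet
        rw [← key, Matrix.det_mul, Matrix.TransvectionStruct.det_toMatrix_prod, one_mul] at this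
        exact this
      have hs'signs : ∀ k, s' k = 1 ∨ s' k = -1 := by
        intro k
        rw [hs']
        by_cases hk : k = i ∨ k = j
        · simp [hk]
        · simp only [if_neg hk]
          exact hs k
      have hfiltereq : Finset.univ.filter (fun k => s' k = -1) = (F.erase i).erase j := by
        ext k
        simp only [Finset.mem_filter, Finset.mem_univ, true_and, Finset.mem_erase, hF, hs']
        by_cases hk : k = i ∨ k = j
        · simp only [if_pos hk]
          constructor
          · intro h; norm_num at h
          · rintro ⟨h1, h2, _⟩
            rcases hk with rfl | rfl
            · exact absurd rfl h2
            · exact absurd rfl h1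
        · simp only [if_neg hk]
          push_neg at hk
          simp [hk.1, hk.2]
      have hcard' : (Finset.univ.filter (fun k => s' k = -1)).card = N - 2 := by
        rw [hfiltereq, Finset.card_erase_of_mem (Finset.mem_erase.2 ⟨hji, hjF⟩),
          Finset.card_erase_of_mem hi, hNcard]
        omega
      have step1 : JoinedIn {M : Matrix (Fin m) (Fin m) ℝ | 0 < M.det}
          (Matrix.diagonal s) (Matrix.diagonal s') := by
        rw [← key]
        exact st18_list_left _ _ hdet'
      exact step1.trans (IH (N - 2) (by omega) s' hs'signs hdet' hcard')

lemma st18_glpos (A : Matrix (Fin m) (Fin m) ℝ) (hA : 0 < A.det) :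
    JoinedIn {M : Matrix (Fin m) (Fin m) ℝ | 0 < M.det} A 1 := by
  obtain ⟨L, L', D, h⟩ := Matrix.Pivot.exists_list_transvec_mul_diagonal_mul_list_transvec A
  have hdD : 0 < (Matrix.diagonal D).det := by
    have := hA
    rw [h, Matrix.det_mul, Matrix.det_mul, Matrix.TransvectionStruct.det_toMatrix_prod,
      Matrix.TransvectionStruct.det_toMatrix_prod, one_mul, mul_one] at this
    exact this
  have hd2 : 0 < (Matrix.diagonal D *
      (L'.map Matrix.TransvectionStruct.toMatrix).prod).det := by
    rw [Matrix.det_mul, Matrix.TransvectionStruct.det_toMatrix_prod, mul_one]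
    exact hdD
  have j1 : JoinedIn {M : Matrix (Fin m) (Fin m) ℝ | 0 < M.det} A
      (Matrix.diagonal D * (L'.map Matrix.TransvectionStruct.toMatrix).prod) := by
    rw [h, Matrix.mul_assoc]
    exact st18_list_left L _ hd2
  have j2 := st18_list_right L' (Matrix.diagonal D) hdD
  have j3 := st18_diag_deform D hdD
  have j4 := st18_signs (Finset.univ.filter
      (fun i => (if D i < 0 then (-1 : ℝ) else 1) = -1)).card
    (fun i => if D i < 0 then (-1 : ℝ) else 1)
    (fun i => by by_cases hDi : D i < 0 <;> simp [hDi]) (j3.target_mem) rfl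
  exact ((j1.trans j2).trans j3).trans j4

end glpos4
section tuples

open Matrix Finset

variable {V : Type*} [NormedAddCommGroup V] [NormedSpace ℝ V] [FiniteDimensional ℝ V]
variable (B : V →ₗ[ℝ] V →ₗ[ℝ] ℝ)

lemma st18_map {m : ℕ} (v : Fin m → V)
    (hv : LinearIndependent ℝ v ∧
      ∀ x ∈ Submodule.span ℝ (Set.range v), x ≠ 0 → 0 < B x x)
    (A : Matrix (Fin m) (Fin m) ℝ) (hA : 0 < A.det) :
    JoinedIn {u : Fin m → V | LinearIndependent ℝ u ∧
        ∀ x ∈ Submodule.span ℝ (Set.range u), x ≠ 0 → 0 < B x x}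
      (fun k => ∑ jj, A jj k • v jj) v := by
  set φ : Matrix (Fin m) (Fin m) ℝ → (Fin m → V) :=
    fun M => fun k => ∑ jj, M jj k • v jj with hφ
  have hφcont : Continuous φ := by
    apply continuous_pi
    intro k
    exact continuous_finset_sum _ fun jj _ =>
      (continuous_id.matrix_elem jj k).smul continuous_const
  have hφone : φ 1 = v := by
    funext k
    simp [hφ, Matrix.one_apply, ite_smul]
  have himg : φ '' {M : Matrix (Fin m) (Fin m) ℝ | 0 < M.det} ⊆
      {u : Fin m → V | LinearIndependent ℝ u ∧
        ∀ x ∈ Submodule.span ℝ (Set.range u), x ≠ 0 → 0 < B x x} := by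
    rintro _ ⟨M, hM, rfl⟩
    rw [Set.mem_setOf_eq, st18_mem_iff B]
    intro c hc
    have hsum : ∑ k, c k • φ M k = ∑ jj, (M *ᵥ c) jj • v jj := by
      calc ∑ k, c k • φ M k = ∑ k, ∑ jj, (M jj k * c k) • v jj := by
            refine Finset.sum_congr rfl fun k _ => ?_
            rw [hφ, Finset.smul_sum]
            exact Finset.sum_congr rfl fun jj _ => by rw [smul_smul, mul_comm]
        _ = ∑ jj, ∑ k, (M jj k * c k) • v jj := Finset.sum_comm
        _ = ∑ jj, (M *ᵥ c) jj • v jj := by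
            refine Finset.sum_congr rfl fun jj _ => ?_
            rw [← Finset.sum_smul]
            rfl
    rw [hsum]
    apply (st18_mem_iff B v).1 hv
    intro h0
    have : M.det = 0 := Matrix.exists_mulVec_eq_zero_iff.1 ⟨c, hc, h0⟩
    exact hM.ne' this
  have := ((st18_glpos A hA).map hφcont).mono himg
  rwa [hφone] at this

lemma st18_proj (hsymm : ∀ v w : V, B v w = B w v) {m : ℕ}
    (hmax : ∀ P : Submodule ℝ V, (∀ x ∈ P, x ≠ 0 → 0 < B x x) → Module.finrank ℝ P ≤ m)
    (v w : Fin m → V)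
    (hv : LinearIndependent ℝ v ∧
      ∀ x ∈ Submodule.span ℝ (Set.range v), x ≠ 0 → 0 < B x x)
    (hw : LinearIndependent ℝ w ∧
      ∀ x ∈ Submodule.span ℝ (Set.range w), x ≠ 0 → 0 < B x x) :
    ∃ A : Matrix (Fin m) (Fin m) ℝ,
      JoinedIn {u : Fin m → V | LinearIndependent ℝ u ∧
          ∀ x ∈ Submodule.span ℝ (Set.range u), x ≠ 0 → 0 < B x x}
        w (fun k => ∑ jj, A jj k • v jj) ∧
      (Matrix.of fun j k : Fin m => B (v j) (v k)) * A =
        (Matrix.of fun j k : Fin m => B (v j) (w k)) := by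
  classical
  set Gv : Matrix (Fin m) (Fin m) ℝ := Matrix.of fun j k : Fin m => B (v j) (v k) with hGvdef
  have hGv : IsUnit Gv.det := (st18_gram_pos B hsymm v hv).ne'.isUnit
  set A : Matrix (Fin m) (Fin m) ℝ :=
    Matrix.of fun jj k : Fin m => (Gv⁻¹ *ᵥ fun j => B (v j) (w k)) jj with hAdef
  set u : Fin m → V := fun k => ∑ jj, A jj k • v jj with hudef
  have hGA : Gv * A = Matrix.of fun j k : Fin m => B (v j) (w k) := by
    ext j k
    have h1 : (Gv * A) j k = (Gv *ᵥ (Gv⁻¹ *ᵥ fun j' => B (v j') (w k))) j := by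
      rw [Matrix.mul_apply]
      simp only [Matrix.mulVec, dotProduct, hAdef, Matrix.of_apply]
    rw [h1, Matrix.mulVec_mulVec, Matrix.mul_nonsing_inv _ hGv, Matrix.one_mulVec]
    rfl
  have keyB : ∀ j k, B (v j) (u k) = B (v j) (w k) := by
    intro j k
    rw [show u k = ∑ l, A l k • v l from rfl, st18_sum2]
    calc ∑ l, A l k * B (v j) (v l) = (Gv * A) j k := by
          rw [Matrix.mul_apply]
          exact Finset.sum_congr rfl fun l _ => (mul_comm _ _)
      _ = B (v j) (w k) := by rw [hGA]; rfl
  refine ⟨A, ?_, hGA⟩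
  apply JoinedIn.ofLine (f := fun t : ℝ => fun k => w k + t • (u k - w k))
  · apply Continuous.continuousOn
    apply continuous_pi
    intro k
    exact continuous_const.add (continuous_id.smul continuous_const)
  · funext k; simp
  · funext k; simp; rfl
  · rintro _ ⟨t, ht, rfl⟩
    rw [Set.mem_setOf_eq, st18_mem_iff B]
    intro cc hcc
    set p : V := ∑ k, cc k • u k with hp
    set y : V := ∑ k, cc k • w k with hy
    set q : V := y - p with hq
    have hcombo : ∑ k, cc k • (w k + t • (u k - w k)) = p + (1 - t) • q := by
      have h1 : ∑ k, cc k • (w k + t • (u k - w k)) =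
          y + t • (p - y) := by
        rw [Finset.sum_congr rfl (fun k _ => smul_add (cc k) (w k) (t • (u k - w k))),
          Finset.sum_add_distrib]
        congr 1
        rw [Finset.sum_congr rfl (fun k _ => smul_comm (cc k) t (u k - w k)),
          ← Finset.smul_sum]
        congr 1
        rw [Finset.sum_congr rfl (fun k _ => smul_sub (cc k) (u k) (w k)),
          Finset.sum_sub_distrib]
      rw [h1, hq]
      module
    rw [hcombo]
    -- orthogonality
    have horthj : ∀ j, B (v j) q = 0 := by
      intro j
      have h1 : B (v j) p = B (v j) y := by
        rw [hp, hy, st18_sum2, st18_sum2]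
        exact Finset.sum_congr rfl fun k _ => by rw [keyB]
      rw [hq, map_sub, h1, sub_self]
    have horth : ∀ x ∈ Submodule.span ℝ (Set.range v), B x q = 0 := by
      intro x hx
      have hle : Submodule.span ℝ (Set.range v) ≤ LinearMap.ker (B.flip q) := by
        rw [Submodule.span_le]
        rintro _ ⟨j, rfl⟩
        simpa using horthj j
      simpa using hle hx
    have hpspan : p ∈ Submodule.span ℝ (Set.range v) := by
      apply Submodule.sum_mem
      intro k _
      apply Submodule.smul_mem
      apply Submodule.sum_mem
      intro jj _
      exact Submodule.smul_mem _ _ (Submodule.subset_span ⟨jj, rfl⟩)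
    have hBpq : B p q = 0 := horth p hpspan
    have hBqp : B q p = 0 := by rw [hsymm]; exact hBpq
    have hyy : 0 < B y y := (st18_mem_iff B w).1 hw cc hcc
    have hsplit : B y y = B p p + B q q := by
      have hy2 : y = p + q := by rw [hq]; abel
      rw [hy2]
      simp only [map_add, LinearMap.add_apply, hBpq, hBqp]
      ring
    have hqq : B q q ≤ 0 := by
      by_contra hq'
      push_neg at hq'
      have hfr : m ≤ Module.finrank ℝ (Submodule.span ℝ (Set.range v)) := by
        rw [finrank_span_eq_card hv.1]; simp
      exact st18_no_orth B hsymm hmax _ hv.2 hfr q horth hq'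
    have hquad : B (p + (1 - t) • q) (p + (1 - t) • q) =
        B p p + (1 - t) ^ 2 * B q q := by
      simp [map_add, _root_.map_smul, hBpq, hBqp, smul_eq_mul]
      ring
    rw [hquad]
    nlinarith [mul_nonneg (mul_nonneg ht.1 (by linarith [ht.2] : (0:ℝ) ≤ 2 - t))
      (neg_nonneg.2 hqq)]

end tuples
/-- For a non-degenerate symmetric bilinear form `B` of signature `(m, n)`, `m > 0`, the set
`𝒱⁺` of linearly independent `m`-tuples spanning a `B`-positive-definite subspace has exactly
two path components, and two tuples lie in the same component iff `det (B (v j) (w k)) > 0`. -/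
theorem stmt18 {V : Type*} [NormedAddCommGroup V] [NormedSpace ℝ V]
    [FiniteDimensional ℝ V]
    (B : V →ₗ[ℝ] V →ₗ[ℝ] ℝ)
    (hsymm : ∀ v w : V, B v w = B w v)
    (hnondeg : ∀ v : V, (∀ w : V, B v w = 0) → v = 0)
    (m n : ℕ) (hm : 0 < m)
    (hdim : Module.finrank ℝ V = m + n)
    (hpos : ∃ P : Submodule ℝ V, Module.finrank ℝ P = m ∧
      ∀ x ∈ P, x ≠ 0 → 0 < B x x)
    (hmax : ∀ P : Submodule ℝ V, (∀ x ∈ P, x ≠ 0 → 0 < B x x) →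
      Module.finrank ℝ P ≤ m)
    (S : Set (Fin m → V))
    (hS : S = {v : Fin m → V | LinearIndependent ℝ v ∧
      ∀ x ∈ Submodule.span ℝ (Set.range v), x ≠ 0 → 0 < B x x}) :
    (∀ v ∈ S, ∀ w ∈ S,
      (JoinedIn S v w ↔ 0 < Matrix.det (Matrix.of fun j k : Fin m => B (v j) (w k)))) ∧
    ∃ v₁ ∈ S, ∃ v₂ ∈ S, ¬ JoinedIn S v₁ v₂ ∧
      ∀ w ∈ S, JoinedIn S w v₁ ∨ JoinedIn S w v₂ := by
  subst hS
  have hmem : ∀ v : Fin m → V, v ∈ {v : Fin m → V | LinearIndependent ℝ v ∧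
      ∀ x ∈ Submodule.span ℝ (Set.range v), x ≠ 0 → 0 < B x x} ↔
      (LinearIndependent ℝ v ∧
      ∀ x ∈ Submodule.span ℝ (Set.range v), x ≠ 0 → 0 < B x x) := fun v => Iff.rfl
  -- Part 1 : the characterization of joinedness
  have main : ∀ v ∈ {v : Fin m → V | LinearIndependent ℝ v ∧
      ∀ x ∈ Submodule.span ℝ (Set.range v), x ≠ 0 → 0 < B x x},
      ∀ w ∈ {v : Fin m → V | LinearIndependent ℝ v ∧
      ∀ x ∈ Submodule.span ℝ (Set.range v), x ≠ 0 → 0 < B x x},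
      (JoinedIn {v : Fin m → V | LinearIndependent ℝ v ∧
      ∀ x ∈ Submodule.span ℝ (Set.range v), x ≠ 0 → 0 < B x x} v w ↔
      0 < Matrix.det (Matrix.of fun j k : Fin m => B (v j) (w k))) := by
    intro v hv w hw
    rw [hmem] at hv hw
    constructor
    · rintro ⟨γ, hγ⟩
      set g : (Fin m → V) → ℝ :=
        fun u => Matrix.det (Matrix.of fun j k : Fin m => B (u j) (w k)) with hg
      have hgcont : Continuous g := by
        apply Continuous.matrix_det
        apply continuous_matrix
        intro j k
        exact ((B.flip (w k)).continuous_of_finiteDimensional).comp (continuous_apply j)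
      have hne : ∀ t : unitInterval, g (γ t) ≠ 0 := fun t =>
        st18_gram_ne B hsymm hmax _ w (hγ t) hw
      have hf1 : 0 < g (γ 1) := by
        rw [γ.target]
        exact st18_gram_pos B hsymm w hw
      by_contra hcon
      have hf0 : g (γ 0) < 0 := by
        rcases (hne 0).lt_or_gt with h | h
        · exact h
        · rw [γ.source] at h
          exact absurd (by simpa only [hg] using h) hcon
      have hcont : Continuous fun t : unitInterval => g (γ t) :=
        hgcont.comp γ.continuous
      obtain ⟨t, ht⟩ := intermediate_value_univ (0 : unitInterval) 1 hcont
        ⟨hf0.le, hf1.le⟩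
      exact hne t ht
    · intro hdet
      obtain ⟨A, hjoin, hGA⟩ := st18_proj B hsymm hmax v w hv hw
      have hdetGv := st18_gram_pos B hsymm v hv
      have hdetA : 0 < A.det := by
        have hmul : (Matrix.of fun j k : Fin m => B (v j) (v k)).det * A.det =
            (Matrix.of fun j k : Fin m => B (v j) (w k)).det := by
          rw [← Matrix.det_mul, hGA]
        by_contra hA
        push_neg at hA
        nlinarith
      exact (hjoin.trans (st18_map B v hv A hdetA)).symm
  refine ⟨main, ?_⟩
  -- Part 2 : exactly two components
  obtain ⟨P, hPrank, hPpos⟩ := hpos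
  let b : Module.Basis (Fin m) ℝ P := Module.finBasisOfFinrankEq ℝ P hPrank
  set v₁ : Fin m → V := fun i => (b i : V) with hv₁def
  have hv₁ : LinearIndependent ℝ v₁ ∧
      ∀ x ∈ Submodule.span ℝ (Set.range v₁), x ≠ 0 → 0 < B x x := by
    rw [st18_mem_iff B]
    intro c hc
    have hx : ∑ i, c i • v₁ i = ((∑ i, c i • b i : P) : V) := by
      simp [hv₁def]
    rw [hx]
    have hz : (∑ i, c i • b i : P) ≠ 0 := by
      intro h0
      exact hc (funext fun i =>
        Fintype.linearIndependent_iff.1 b.linearIndependent c h0 i)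
    exact hPpos _ (∑ i, c i • b i : P).2 (fun h => hz (by exact_mod_cast h))
  set i0 : Fin m := ⟨0, hm⟩ with hi0
  set ε : Fin m → ℝ := fun i => if i = i0 then -1 else 1 with hε
  have hεne : ∀ i, ε i ≠ 0 := by
    intro i
    rw [hε]
    by_cases h : i = i0 <;> simp [h]
  set v₂ : Fin m → V := fun i => ε i • v₁ i with hv₂def
  have hv₂ : LinearIndependent ℝ v₂ ∧
      ∀ x ∈ Submodule.span ℝ (Set.range v₂), x ≠ 0 → 0 < B x x := by
    rw [st18_mem_iff B]
    intro c hc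
    have hx : ∑ i, c i • v₂ i = ∑ i, (c i * ε i) • v₁ i := by
      refine Finset.sum_congr rfl fun i _ => ?_
      rw [hv₂def, smul_smul]
    rw [hx]
    apply (st18_mem_iff B v₁).1 hv₁
    intro h0
    apply hc
    funext i
    have := congrFun h0 i
    rcases mul_eq_zero.1 this with h | h
    · exact h
    · exact absurd h (hεne i)
  have hprodε : ∏ i, ε i = -1 := by
    rw [hε]
    rw [Finset.prod_ite_eq' Finset.univ i0 (fun _ => (-1 : ℝ))]
    simp
  -- determinant relation with v₂ in second slot
  have hdetrel : ∀ u : Fin m → V,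
      Matrix.det (Matrix.of fun j k : Fin m => B (u j) (v₂ k)) =
      - Matrix.det (Matrix.of fun j k : Fin m => B (u j) (v₁ k)) := by
    intro u
    have heq : (Matrix.of fun j k : Fin m => B (u j) (v₂ k)) =
        (Matrix.of fun j k : Fin m => B (u j) (v₁ k)) * Matrix.diagonal ε := by
      ext j k
      rw [Matrix.mul_diagonal]
      simp only [Matrix.of_apply, hv₂def, _root_.map_smul, smul_eq_mul]
      ring
    rw [heq, Matrix.det_mul, Matrix.det_diagonal, hprodε]
    ring
  refine ⟨v₁, hv₁, v₂, hv₂, ?_, ?_⟩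
  · rw [main v₁ hv₁ v₂ hv₂, hdetrel v₁]
    have := st18_gram_pos B hsymm v₁ hv₁
    push_neg
    linarith
  · intro w hw
    have hne := st18_gram_ne B hsymm hmax w v₁ hw hv₁
    rcases lt_or_gt_of_ne hne with hlt | hgt
    · right
      rw [main w hw v₂ hv₂, hdetrel w]
      linarith
    · left
      rw [main w hw v₁ hv₁]
      exact hgt
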